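/- The image of the polynomial p(x₁,x₂) = [x₁,x₂]²·x₁ (where [x₁,x₂] = x₁x₂ − x₂x₁), evaluated on the real quaternion algebra ℍ, consists of all quaternions except the nonzero scalars: Im p = {0} ∪ {q ∈ ℍ : q ∉ ℝ·1}. In particular p(x₁,x₂) = 0 whenever x₁ is scalar, while every non-scalar quaternion is a value of p. -/

import Mathlib

open Quaternion



lemma comm_re (x y : ℍ[ℝ]) : (x * y - y * x).re = 0 := by
  simp [Quaternion.re_sub, Quaternion.re_mul]; ring

lemma sq_of_re_zero (c : ℍ[ℝ]) (h : c.re = 0) :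
    c ^ 2 = -((Quaternion.normSq c : ℝ) : ℍ[ℝ]) := by
  have hstar : star c = -c := by
    ext <;> simp [h]
  have := Quaternion.self_mul_star c
  rw [hstar, mul_neg] at this
  rw [sq, ← neg_neg (c*c), this]

lemma build (q u : ℍ[ℝ]) (h : Quaternion.normSq (q * u - u * q) = 1) :
    ∃ x₁ x₂ : ℍ[ℝ], q = (x₁ * x₂ - x₂ * x₁) ^ 2 * x₁ := by
  refine ⟨-q, u, ?_⟩
  have h1 : (-q) * u - u * (-q) = -(q * u - u * q) := by noncomm_ring
  rw [h1, neg_pow, sq_of_re_zero _ (comm_re q u), h]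
  norm_num

def mkq (x y : ℝ) : ℍ[ℝ] := ⟨0, 0, x, y⟩

@[simp] lemma mkq_re (x y : ℝ) : (mkq x y).re = 0 := rfl
@[simp] lemma mkq_imI (x y : ℝ) : (mkq x y).imI = 0 := rfl
@[simp] lemma mkq_imJ (x y : ℝ) : (mkq x y).imJ = x := rfl
@[simp] lemma mkq_imK (x y : ℝ) : (mkq x y).imK = y := rfl

lemma normSq_comm_aux (q : ℍ[ℝ]) (t : ℝ) :
    Quaternion.normSq (q * mkq (t * q.imK) (-(t * q.imJ)) -
        mkq (t * q.imK) (-(t * q.imJ)) * q) =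
      4 * t ^ 2 * ((q.imJ ^ 2 + q.imK ^ 2) * (q.imI ^ 2 + q.imJ ^ 2 + q.imK ^ 2)) := by
  simp only [Quaternion.normSq_def', Quaternion.re_sub, Quaternion.imI_sub,
    Quaternion.imJ_sub, Quaternion.imK_sub, Quaternion.re_mul, Quaternion.imI_mul,
    Quaternion.imJ_mul, Quaternion.imK_mul, mkq_re, mkq_imI, mkq_imJ, mkq_imK]
  ring

lemma normSq_comm_aux2 (q : ℍ[ℝ]) (t : ℝ) :
    Quaternion.normSq (q * mkq t 0 - mkq t 0 * q) =
      4 * t ^ 2 * (q.imI ^ 2 + q.imK ^ 2) := by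
  simp only [Quaternion.normSq_def', Quaternion.re_sub, Quaternion.imI_sub,
    Quaternion.imJ_sub, Quaternion.imK_sub, Quaternion.re_mul, Quaternion.imI_mul,
    Quaternion.imJ_mul, Quaternion.imK_mul, mkq_re, mkq_imI, mkq_imJ, mkq_imK]
  ring

lemma exists_unit_comm (q : ℍ[ℝ]) (h : q.im ≠ 0) :
    ∃ u : ℍ[ℝ], Quaternion.normSq (q * u - u * q) = 1 := by
  by_cases hbc : q.imJ ^ 2 + q.imK ^ 2 = 0
  · -- then imI ≠ 0
    have hb : q.imJ = 0 := by nlinarith [sq_nonneg q.imJ, sq_nonneg q.imK]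
    have hc : q.imK = 0 := by nlinarith [sq_nonneg q.imJ, sq_nonneg q.imK]
    have ha : q.imI ≠ 0 := by
      intro ha; apply h; ext <;> simp [ha, hb, hc]
    refine ⟨mkq (1 / (2 * q.imI)) 0, ?_⟩
    rw [normSq_comm_aux2, hc]
    field_simp
    ring
  · have hbc' : 0 < q.imJ ^ 2 + q.imK ^ 2 := lt_of_le_of_ne (by positivity) (Ne.symm hbc)
    set D : ℝ := (q.imJ ^ 2 + q.imK ^ 2) * (q.imI ^ 2 + q.imJ ^ 2 + q.imK ^ 2) with hDdef
    have hD : 0 < D := by nlinarith [sq_nonneg q.imI]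
    have hs : Real.sqrt D ^ 2 = D := Real.sq_sqrt hD.le
    have hs0 : Real.sqrt D ≠ 0 := by positivity
    refine ⟨mkq ((1 / (2 * Real.sqrt D)) * q.imK) (-((1 / (2 * Real.sqrt D)) * q.imJ)), ?_⟩
    rw [normSq_comm_aux q (1 / (2 * Real.sqrt D)), ← hDdef]
    field_simp
    nlinarith [hs]

lemma im_ne_zero_of_nonscalar (q : ℍ[ℝ]) (h : ∀ r : ℝ, q ≠ (r : ℍ[ℝ])) : q.im ≠ 0 := by
  intro him
  apply h q.re
  ext
  · simp
  · simpa using congrArg QuaternionAlgebra.imI him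
  · simpa using congrArg QuaternionAlgebra.imJ him
  · simpa using congrArg QuaternionAlgebra.imK him

/-- The image of `p(x₁,x₂) = [x₁,x₂]²·x₁` on the real quaternions is the set
of all quaternions except the nonzero scalars; moreover `p` vanishes whenever
`x₁` is scalar. -/
theorem image_commutator_sq_mul_quaternion :
    {q : ℍ[ℝ] | ∃ x₁ x₂ : ℍ[ℝ], q = (x₁ * x₂ - x₂ * x₁) ^ 2 * x₁} =
      ({0} : Set ℍ[ℝ]) ∪ {q : ℍ[ℝ] | ∀ r : ℝ, q ≠ (r : ℍ[ℝ])} ∧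
    (∀ x₁ x₂ : ℍ[ℝ], (∃ r : ℝ, x₁ = (r : ℍ[ℝ])) →
      (x₁ * x₂ - x₂ * x₁) ^ 2 * x₁ = 0) := by
  constructor
  · ext q
    simp only [Set.mem_setOf_eq, Set.mem_union, Set.mem_singleton_iff]
    constructor
    · rintro ⟨x₁, x₂, rfl⟩
      by_cases h0 : (x₁ * x₂ - x₂ * x₁) ^ 2 * x₁ = 0
      · exact Or.inl h0
      · refine Or.inr fun r hr => ?_
        set c := x₁ * x₂ - x₂ * x₁ with hc
        have hsq : c ^ 2 = -((Quaternion.normSq c : ℝ) : ℍ[ℝ]) :=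
          sq_of_re_zero c (comm_re x₁ x₂)
        have hn : Quaternion.normSq c ≠ 0 := by
          intro hn0
          apply h0
          rw [hsq, hn0]
          simp
        -- x₁ is a scalar
        have hx₁ : x₁ = ((-(Quaternion.normSq c)⁻¹ * r : ℝ) : ℍ[ℝ]) := by
          have : -((Quaternion.normSq c : ℝ) : ℍ[ℝ]) * x₁ = (r : ℍ[ℝ]) := by
            rw [← hsq, ← hr]
          have hcoe : ((Quaternion.normSq c : ℝ) : ℍ[ℝ]) ≠ 0 := by
            intro hh
            exact hn (Quaternion.coe_injective (hh.trans Quaternion.coe_zero.symm))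
          have key : ((-(Quaternion.normSq c)⁻¹ * r : ℝ) : ℍ[ℝ]) = x₁ := by
            rw [Quaternion.coe_mul, ← this, ← mul_assoc]
            push_cast
            rw [neg_mul_neg, inv_mul_cancel₀ hcoe, one_mul]
          exact key.symm
        have hczero : c = 0 := by
          rw [hc, hx₁, Quaternion.coe_commutes, sub_self]
        rw [hczero] at hn
        simp at hn
    · rintro (rfl | h)
      · exact ⟨0, 0, by simp⟩
      · have him : q.im ≠ 0 := im_ne_zero_of_nonscalar q h
        obtain ⟨u, hu⟩ := exists_unit_comm q him
        exact build q u hu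
  · rintro x₁ x₂ ⟨r, rfl⟩
    rw [Quaternion.coe_commutes, sub_self]
    simp
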